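/- Let S be a nonempty finite set of states, A a set of actions, P : S × A × S → ℝ with P(s'|s,a) ≥ 0 and ∑_{s'∈S} P(s'|s,a) = 1 for all (s,a), R : S × A → ℝ, γ ∈ [0,1), β̂(s) ⊆ β̃(s) ⊆ A nonempty finite subsets for each s, λ ∈ [0,1], and (T_DMG Q)(s,a) = R(s,a) + γ ∑_{s'} P(s'|s,a)·[λ·max_{a'∈β̃(s')} Q(s',a') + (1−λ)·max_{a'∈β̂(s')} Q(s',a')]. Then T_DMG is monotone on the mild generalization area: for all f₁, f₂ : S × A → ℝ, if f₁(s,a) ≥ f₂(s,a) for every s ∈ S and every a ∈ β̃(s), then (T_DMG f₁)(s,a) ≥ (T_DMG f₂)(s,a) for every pair (s,a) ∈ S × A. -/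

import Mathlib

/-- Monotonicity of the DMG operator: if `f₁ ≥ f₂` on the mild generalization area, then
`T_DMG f₁ ≥ T_DMG f₂` everywhere. -/
theorem dmg_operator_monotone
    {S A : Type*} [Fintype S] [Nonempty S]
    (P : S → A → S → ℝ) (R : S → A → ℝ) (γ lam : ℝ)
    (hγ0 : 0 ≤ γ) (hγ1 : γ < 1) (hlam0 : 0 ≤ lam) (hlam1 : lam ≤ 1)
    (hPpos : ∀ s a s', 0 ≤ P s a s') (hPsum : ∀ s a, ∑ s' : S, P s a s' = 1)
    (βhat βtil : S → Finset A)
    (hβhat : ∀ s, (βhat s).Nonempty) (hβtil : ∀ s, (βtil s).Nonempty)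
    (hsub : ∀ s, βhat s ⊆ βtil s)
    (TDMG : (S → A → ℝ) → S → A → ℝ)
    (hTDMG : ∀ Q s a, TDMG Q s a =
      R s a + γ * ∑ s' : S, P s a s' *
        (lam * (βtil s').sup' (hβtil s') (fun a' => Q s' a') +
          (1 - lam) * (βhat s').sup' (hβhat s') (fun a' => Q s' a')))
    (f₁ f₂ : S → A → ℝ)
    (hf : ∀ s, ∀ a ∈ βtil s, f₁ s a ≥ f₂ s a) :
    ∀ (s : S) (a : A), TDMG f₁ s a ≥ TDMG f₂ s a := by
  intro s a
  rw [hTDMG, hTDMG]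
  apply add_le_add_right
  apply mul_le_mul_of_nonneg_left _ hγ0
  apply Finset.sum_le_sum
  intro s' _
  apply mul_le_mul_of_nonneg_left _ (hPpos s a s')
  have htil : (βtil s').sup' (hβtil s') (fun a' => f₂ s' a') ≤
      (βtil s').sup' (hβtil s') (fun a' => f₁ s' a') :=
    Finset.sup'_le _ _ fun b hb => le_trans (hf s' b hb) (Finset.le_sup' _ hb)
  have hhat : (βhat s').sup' (hβhat s') (fun a' => f₂ s' a') ≤
      (βhat s').sup' (hβhat s') (fun a' => f₁ s' a') :=
    Finset.sup'_le _ _ fun b hb =>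
      le_trans (hf s' b (hsub s' hb)) (Finset.le_sup' _ hb)
  exact add_le_add (mul_le_mul_of_nonneg_left htil hlam0)
    (mul_le_mul_of_nonneg_left hhat (by linarith))
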